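/- arXiv:1405.2540 — 5 statements merged into one kernel-verified Lean document; each statement's English description precedes it below -/
import Mathlib

section
/- Let A be a commutative unital algebra that is finitely generated as an algebra over ℂ, and let M be a finitely generated A-module. Then the A-finite ℂ-linear functionals on M separate the points of M; that is, the intersection of the kernels of all A-finite functionals φ : M → ℂ is the zero submodule. (Equivalently, the space of A-finite functionals is dense in the full ℂ-linear dual of M.) -/
/-- A ℂ-linear functional `φ` on `M` is *A-finite* if the `A`-submodule of the
ℂ-linear dual of `M` generated by `φ` (i.e. the set of functionals `x ↦ φ (a • x)`,
`a ∈ A`, together with its ℂ-span) is finite-dimensional over ℂ. -/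
def IsAFinite (A : Type*) [CommRing A] [Algebra ℂ A]
    {M : Type*} [AddCommGroup M] [Module A M] [Module ℂ M] [IsScalarTower ℂ A M]
    (φ : M →ₗ[ℂ] ℂ) : Prop :=
  FiniteDimensional ℂ
    (Submodule.span ℂ {ψ : M →ₗ[ℂ] ℂ | ∃ a : A, ∀ x : M, ψ x = φ (a • x)})

/-- If `A` is a commutative unital ℂ-algebra which is finitely generated as a ℂ-algebra
and `M` is a finitely generated `A`-module, then the `A`-finite ℂ-linear functionals on
`M` separate points: the intersection of their kernels is zero. -/
theorem zFinite_functionals_separate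
    (A : Type*) [CommRing A] [Algebra ℂ A] [Algebra.FiniteType ℂ A]
    (M : Type*) [AddCommGroup M] [Module A M] [Module ℂ M] [IsScalarTower ℂ A M]
    [Module.Finite A M]
    (x : M) (hx : ∀ φ : M →ₗ[ℂ] ℂ, IsAFinite A φ → φ x = 0) :
    x = 0 := by
  by_contra hx0
  haveI : IsNoetherianRing A := Algebra.FiniteType.isNoetherianRing ℂ A
  haveI : SMulCommClass A ℂ M :=
    ⟨fun a c y => by
      rw [← algebraMap_smul A c y, ← algebraMap_smul A c (a • y), ← mul_smul, ← mul_smul,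
        mul_comm]⟩
  -- the annihilator ideal of `x`
  set I : Ideal A := LinearMap.ker (LinearMap.toSpanSingleton A M x) with hIdef
  have hI : I ≠ ⊤ := by
    intro h
    have h1 : (1 : A) ∈ I := h ▸ Submodule.mem_top
    rw [hIdef, LinearMap.mem_ker, LinearMap.toSpanSingleton_apply, one_smul] at h1
    exact hx0 h1
  obtain ⟨m, hm, hIm⟩ := Ideal.exists_le_maximal I hI
  -- find `k` with `x ∉ m ^ k • ⊤`
  -- transfer to a same-universe representative of `M` to apply Krull's lemma
  obtain ⟨n, f, hf⟩ := Module.Finite.exists_fin' A M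
  let e : ((Fin n → A) ⧸ LinearMap.ker f) ≃ₗ[A] M := f.quotKerEquivOfSurjective hf
  have hk : ∃ k : ℕ, x ∉ (m ^ k • ⊤ : Submodule A M) := by
    by_contra h
    push_neg at h
    have hmap : ∀ i : ℕ,
        Submodule.map (e : ((Fin n → A) ⧸ LinearMap.ker f) →ₗ[A] M)
          (m ^ i • ⊤ : Submodule A ((Fin n → A) ⧸ LinearMap.ker f))
        = (m ^ i • ⊤ : Submodule A M) := by
      intro i
      rw [Submodule.map_smul'', Submodule.map_top, LinearEquiv.range]
    have hx' : e.symm x ∈ (⨅ i : ℕ, m ^ i • ⊤ :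
        Submodule A ((Fin n → A) ⧸ LinearMap.ker f)) := by
      rw [Submodule.mem_iInf]
      intro i
      have : x ∈ Submodule.map (e : ((Fin n → A) ⧸ LinearMap.ker f) →ₗ[A] M)
          (m ^ i • ⊤ : Submodule A ((Fin n → A) ⧸ LinearMap.ker f)) := (hmap i).symm ▸ h i
      obtain ⟨y, hy, hyx⟩ := this
      have : e.symm x = y := by rw [← hyx]; exact e.symm_apply_apply y
      rwa [this]
    obtain ⟨r, hr'⟩ := (Ideal.mem_iInf_smul_pow_eq_bot_iff (I := m) (e.symm x)).mp hx'
    have hr : (r : A) • x = x := by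
      have := congrArg e hr'
      rwa [map_smul, e.apply_symm_apply] at this
    have hmem : (1 : A) - (r : A) ∈ I := by
      rw [hIdef, LinearMap.mem_ker, LinearMap.toSpanSingleton_apply, sub_smul, one_smul, hr,
        sub_self]
    have h1 : (1 : A) ∈ m := by
      have := m.add_mem (hIm hmem) r.2
      simpa using this
    exact hm.ne_top ((Ideal.eq_top_iff_one m).mpr h1)
  obtain ⟨k, hk⟩ := hk
  have hk0 : k ≠ 0 := by
    rintro rfl
    simp only [pow_zero, Ideal.one_eq_top, Submodule.top_smul] at hk
    exact hk Submodule.mem_top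
  -- the quotient `B = A ⧸ m ^ k` is a finite-dimensional ℂ-algebra
  haveI : Algebra.FiniteType ℂ (A ⧸ (m ^ k)) :=
    Algebra.FiniteType.of_surjective (Ideal.Quotient.mkₐ ℂ (m ^ k))
      (Ideal.Quotient.mkₐ_surjective ℂ _)
  haveI : Algebra.FiniteType ℂ (A ⧸ m) :=
    Algebra.FiniteType.of_surjective (Ideal.Quotient.mkₐ ℂ m)
      (Ideal.Quotient.mkₐ_surjective ℂ _)
  haveI : m.IsMaximal := hm
  haveI hAm : Module.Finite ℂ (A ⧸ m) := by
    letI F : Field (A ⧸ m) := Ideal.Quotient.field m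
    exact @finite_of_finite_type_of_isJacobsonRing ℂ (A ⧸ m) _ F
      (Ideal.Quotient.algebra ℂ) (by infer_instance) (by infer_instance)
  haveI : Algebra.IsIntegral ℂ (A ⧸ (m ^ k)) := by
    constructor
    intro b
    obtain ⟨a, rfl⟩ := Ideal.Quotient.mk_surjective b
    obtain ⟨p, hpm, hp0⟩ := IsIntegral.of_finite ℂ (Ideal.Quotient.mkₐ ℂ m a)
    have hp0' : Polynomial.aeval ((Ideal.Quotient.mkₐ ℂ m) a) p = 0 := by
      rw [Polynomial.aeval_def]; exact hp0
    have hmem : Polynomial.aeval a p ∈ m := by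
      have h2 : (Ideal.Quotient.mkₐ ℂ m) (Polynomial.aeval a p) = 0 := by
        rw [← Polynomial.aeval_algHom_apply (Ideal.Quotient.mkₐ ℂ m) a p]; exact hp0'
      rw [← Ideal.Quotient.eq_zero_iff_mem]
      simpa [Ideal.Quotient.mkₐ_eq_mk] using h2
    refine ⟨p ^ k, hpm.pow k, ?_⟩
    have key : Polynomial.aeval ((Ideal.Quotient.mkₐ ℂ (m ^ k)) a) (p ^ k) = 0 := by
      rw [map_pow, Polynomial.aeval_algHom_apply (Ideal.Quotient.mkₐ ℂ (m ^ k)) a p, ← map_pow]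
      have hpk : (Polynomial.aeval a p) ^ k ∈ m ^ k := Ideal.pow_mem_pow hmem k
      simpa [Ideal.Quotient.mkₐ_eq_mk] using Ideal.Quotient.eq_zero_iff_mem.mpr hpk
    rw [← Polynomial.aeval_def]
    simpa [Ideal.Quotient.mkₐ_eq_mk] using key
  haveI hBfin : Module.Finite ℂ (A ⧸ (m ^ k)) := Algebra.IsIntegral.finite
  -- the quotient `Q = M ⧸ m ^ k • ⊤` is a finite-dimensional ℂ-vector space
  set N : Submodule A M := (m ^ k • ⊤ : Submodule A M) with hNdef
  haveI : IsScalarTower A (A ⧸ (m ^ k)) (M ⧸ N) :=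
    ⟨fun a b q => by
      obtain ⟨b', rfl⟩ := Ideal.Quotient.mk_surjective b
      obtain ⟨y, rfl⟩ := Submodule.Quotient.mk_surjective _ q
      show Submodule.Quotient.mk ((a * b') • y) = Submodule.Quotient.mk (a • b' • y)
      rw [mul_smul]⟩
  haveI : IsScalarTower ℂ (A ⧸ (m ^ k)) (M ⧸ N) :=
    ⟨fun c b q => by
      obtain ⟨b', rfl⟩ := Ideal.Quotient.mk_surjective b
      obtain ⟨y, rfl⟩ := Submodule.Quotient.mk_surjective _ q
      show Submodule.Quotient.mk ((c • b') • y) = Submodule.Quotient.mk (c • b' • y)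
      rw [smul_assoc]⟩
  haveI : Module.Finite (A ⧸ (m ^ k)) (M ⧸ N) :=
    Module.Finite.of_restrictScalars_finite A (A ⧸ (m ^ k)) (M ⧸ N)
  haveI hQfin : Module.Finite ℂ (M ⧸ N) := Module.Finite.trans (A ⧸ (m ^ k)) (M ⧸ N)
  -- get a functional separating `x` from `N`
  let π : M →ₗ[ℂ] (M ⧸ N) := N.mkQ.restrictScalars ℂ
  have hπx : π x ≠ 0 := by
    intro h
    exact hk ((Submodule.Quotient.mk_eq_zero N).mp h)
  obtain ⟨ψ, hψ⟩ : ∃ ψ : Module.Dual ℂ (M ⧸ N), ψ (π x) ≠ 0 := by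
    by_contra h
    push_neg at h
    exact hπx ((Module.forall_dual_apply_eq_zero_iff ℂ (π x)).mp h)
  let φ : M →ₗ[ℂ] ℂ := ψ ∘ₗ π
  have hAfin : IsAFinite A φ := by
    unfold IsAFinite
    have hle : Submodule.span ℂ {ψ' : M →ₗ[ℂ] ℂ | ∃ a : A, ∀ y : M, ψ' y = φ (a • y)}
        ≤ LinearMap.range π.dualMap := by
      rw [Submodule.span_le]
      rintro ψ' ⟨a, ha⟩
      refine ⟨ψ ∘ₗ ⟨⟨fun q => a • q, fun q₁ q₂ => smul_add a q₁ q₂⟩, fun c q => ?_⟩, ?_⟩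
      · obtain ⟨y, rfl⟩ := Submodule.Quotient.mk_surjective _ q
        show Submodule.Quotient.mk (a • c • y) = Submodule.Quotient.mk (c • a • y)
        rw [smul_comm]
      · ext y
        show ψ (a • π y) = ψ' y
        rw [ha y]
        rfl
    exact Submodule.finiteDimensional_of_le hle
  exact hψ (hx φ hAfin)
end

section
/- Let A be a commutative Noetherian unital ring and let M be a finitely generated A-module. Then the intersection, over all maximal ideals m of A and all natural numbers i, of the submodules mⁱ·M is zero: ⋂_{m maximal} ⋂_{i ∈ ℕ} (mⁱ·M) = 0. -/
section aux

universe u v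

variable {A : Type u} [CommRing A] {M : Type v} [AddCommGroup M] [Module A M]

private lemma ulift_finite [Module.Finite A M] :
    Module.Finite (ULift.{v} A) (ULift.{u} M) := by
  classical
  obtain ⟨s, hs⟩ := Module.Finite.fg_top (R := A) (M := M)
  refine ⟨⟨s.image ULift.up, ?_⟩⟩
  rw [eq_top_iff]
  rintro ⟨x⟩ -
  have hx : x ∈ Submodule.span A (s : Set M) := hs ▸ Submodule.mem_top
  induction hx using Submodule.span_induction with
  | mem y hy =>
      exact Submodule.subset_span (by simpa using Finset.mem_image_of_mem (ULift.up.{u}) hy)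
  | zero => exact Submodule.zero_mem _
  | add y z _ _ hy hz => exact Submodule.add_mem _ hy hz
  | smul a y _ hy =>
      exact Submodule.smul_mem _ (ULift.up a) hy

private lemma mem_smul_ulift {I : Ideal A} {x : M} (hx : x ∈ I • (⊤ : Submodule A M)) :
    ULift.up x ∈ Ideal.map (ULift.ringEquiv.symm : A ≃+* ULift.{v} A) I •
      (⊤ : Submodule (ULift.{v} A) (ULift.{u} M)) := by
  refine Submodule.smul_induction_on hx ?_ ?_
  · intro a ha y _
    exact Submodule.smul_mem_smul (Ideal.mem_map_of_mem _ ha) Submodule.mem_top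
  · intro y z hy hz
    exact Submodule.add_mem _ hy hz

private lemma exists_smul_eq_self [IsNoetherianRing A] [Module.Finite A M]
    (m : Ideal A) (x : M) (hx : x ∈ ⨅ i : ℕ, (m ^ i • ⊤ : Submodule A M)) :
    ∃ r ∈ m, r • x = x := by
  haveI : IsNoetherianRing (ULift.{v} A) :=
    isNoetherianRing_of_ringEquiv A (ULift.ringEquiv.symm)
  haveI := ulift_finite (A := A) (M := M)
  set e : A ≃+* ULift.{v} A := ULift.ringEquiv.symm
  set m' : Ideal (ULift.{v} A) := Ideal.map e m
  have hx' : ULift.up x ∈ ⨅ i : ℕ, (m' ^ i • ⊤ : Submodule (ULift.{v} A) (ULift.{u} M)) := by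
    rw [Submodule.mem_iInf]
    intro i
    rw [show m' ^ i = Ideal.map e (m ^ i) from (Ideal.map_pow _ _ _).symm]
    exact mem_smul_ulift (Submodule.mem_iInf _ |>.mp hx i)
  obtain ⟨r, hr⟩ := (Ideal.mem_iInf_smul_pow_eq_bot_iff m' (ULift.up x)).mp hx'
  obtain ⟨s, hs, hse⟩ := Ideal.mem_map_iff_of_surjective _ e.surjective |>.mp r.prop
  refine ⟨s, hs, ?_⟩
  have : (r : ULift.{v} A) • ULift.up x = ULift.up (s • x) := by
    rw [← hse]; rfl
  rw [this] at hr
  exact congrArg ULift.down hr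

end aux

/-- Artin–Rees / Krull intersection: for a commutative Noetherian unital ring `A`
and a finitely generated `A`-module `M`, the intersection over all maximal ideals `m`
of `A` and all natural numbers `i` of the submodules `mⁱ • M` is zero. -/
theorem iInf_maximal_pow_smul_eq_bot
    (A : Type*) [CommRing A] [IsNoetherianRing A]
    (M : Type*) [AddCommGroup M] [Module A M] [Module.Finite A M] :
    ⨅ (m : Ideal A) (_ : m.IsMaximal) (i : ℕ), (m ^ i • ⊤ : Submodule A M) = ⊥ := by
  rw [eq_bot_iff]
  intro x hx
  simp only [Submodule.mem_iInf] at hx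
  rw [Submodule.mem_bot, ← Ideal.torsionOf_eq_top_iff A x, ← not_ne_iff]
  intro hJ
  obtain ⟨m, hm, hle⟩ := Ideal.exists_le_maximal _ hJ
  obtain ⟨r, hrm, hr⟩ := exists_smul_eq_self m x (by
    rw [Submodule.mem_iInf]; exact hx m hm)
  have h1 : (1 : A) - r ∈ Ideal.torsionOf A M x := by
    simp [Ideal.mem_torsionOf_iff, sub_smul, hr]
  have : (1 : A) ∈ m := by
    have := m.add_mem (hle h1) hrm
    simpa using this
  exact hm.ne_top (m.eq_top_of_isUnit_mem this isUnit_one)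
end

section
/- Let A be a commutative unital algebra that is finitely generated as an algebra over ℂ, let m ⊆ A be a maximal ideal, let M be a finitely generated A-module, and let i be a natural number. If a ℂ-linear functional φ : M → ℂ vanishes on the submodule mⁱ·M, then φ is A-finite, i.e. the A-submodule of the ℂ-linear dual of M generated by φ is finite-dimensional over ℂ. -/
/-- A finitely generated module annihilated by an ideal `J` with `A ⧸ J` module-finite
over `ℂ` is itself finite-dimensional over `ℂ`. -/
lemma aux_finite_of_torsion {A : Type*} [CommRing A] [Algebra ℂ A]
    (J : Ideal A) (hJ : Module.Finite ℂ (A ⧸ J))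
    (P : Type*) [AddCommGroup P] [Module A P] [Module ℂ P] [IsScalarTower ℂ A P]
    [Module.Finite A P] (ht : Module.IsTorsionBySet A P (J : Set A)) :
    Module.Finite ℂ P := by
  letI : Module (A ⧸ J) P := ht.module
  haveI : IsScalarTower A (A ⧸ J) P := ht.isScalarTower
  haveI : IsScalarTower ℂ (A ⧸ J) P := ht.isScalarTower
  haveI : Module.Finite (A ⧸ J) P := Module.Finite.of_restrictScalars_finite A (A ⧸ J) P
  exact Module.Finite.trans (A ⧸ J) P

/-- The residue field of a finitely generated ℂ-algebra is finite over ℂ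
(weak Nullstellensatz via Jacobson rings). -/
lemma aux_residue_finite {A : Type*} [CommRing A] [Algebra ℂ A] [Algebra.FiniteType ℂ A]
    (m : Ideal A) (hm : m.IsMaximal) : Module.Finite ℂ (A ⧸ m) := by
  haveI := hm
  letI : Field (A ⧸ m) := Ideal.Quotient.field m
  haveI : Algebra.FiniteType ℂ (A ⧸ m) :=
    Algebra.FiniteType.of_surjective (Ideal.Quotient.mkₐ ℂ m)
      (Ideal.Quotient.mkₐ_surjective ℂ m)
  exact finite_of_finite_type_of_isJacobsonRing ℂ (A ⧸ m)

lemma aux_quot_pow_finite (A : Type*) [CommRing A] [Algebra ℂ A] [Algebra.FiniteType ℂ A]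
    (m : Ideal A) (hm : m.IsMaximal)
    (M : Type*) [AddCommGroup M] [Module A M] [Module ℂ M] [IsScalarTower ℂ A M]
    [Module.Finite A M] :
    ∀ i : ℕ, Module.Finite ℂ (M ⧸ (m ^ i • ⊤ : Submodule A M)) := by
  haveI : IsNoetherianRing A := Algebra.FiniteType.isNoetherianRing ℂ A
  intro i
  induction i with
  | zero =>
      haveI : Subsingleton (M ⧸ (m ^ 0 • ⊤ : Submodule A M)) := by
        rw [Submodule.Quotient.subsingleton_iff, pow_zero, Ideal.one_eq_top, Submodule.top_smul]
      exact ⟨⟨∅, Subsingleton.elim _ _⟩⟩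
  | succ i ih =>
      set N0 : Submodule A M := m ^ i • ⊤ with hN0
      set N1 : Submodule A M := m ^ (i + 1) • ⊤ with hN1
      have h01 : N1 ≤ N0 :=
        Submodule.smul_mono_left (Ideal.pow_le_pow_right (Nat.le_succ i))
      set X := M ⧸ N1 with hX
      set W : Submodule A X := N0.map N1.mkQ with hW
      -- W is finitely generated over A
      haveI : Module.Finite A X := Module.Finite.quotient A N1
      haveI : Module.Finite A W := Module.Finite.iff_fg.mpr (IsNoetherian.noetherian W)
      -- W is annihilated by m
      have hWt : Module.IsTorsionBySet A W (m : Set A) := by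
        rintro ⟨x, hx⟩ ⟨a, ha⟩
        obtain ⟨y, hy, rfl⟩ := hx
        ext
        show a • (N1.mkQ y) = 0
        rw [← map_smul, Submodule.mkQ_apply, Submodule.Quotient.mk_eq_zero]
        have : a • y ∈ m • N0 := Submodule.smul_mem_smul ha hy
        rwa [hN0, ← Submodule.smul_assoc, smul_eq_mul, ← pow_succ'] at this
      haveI hWfin : Module.Finite ℂ W :=
        aux_finite_of_torsion m (aux_residue_finite m hm) W hWt
      -- X ⧸ W is ℂ-finite via the third isomorphism theorem and IH
      have eq1 : (X ⧸ W) ≃ₗ[A] M ⧸ N0 := Submodule.quotientQuotientEquivQuotient N1 N0 h01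
      haveI : Module.Finite ℂ (X ⧸ W) :=
        Module.Finite.equiv (eq1.restrictScalars ℂ).symm
      -- assemble: X is ℂ-noetherian, hence ℂ-finite
      haveI h1 : IsNoetherian ℂ (W.restrictScalars ℂ) := by
        haveI : IsNoetherian ℂ W := IsNoetherian.iff_fg.mpr hWfin
        exact isNoetherian_of_linearEquiv ((Submodule.restrictScalarsEquiv ℂ A X W).restrictScalars ℂ).symm
      haveI h2 : IsNoetherian ℂ (X ⧸ (W.restrictScalars ℂ)) := by
        haveI : IsNoetherian ℂ (X ⧸ W) := IsNoetherian.iff_fg.mpr inferInstance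
        exact isNoetherian_of_linearEquiv (Submodule.Quotient.restrictScalarsEquiv ℂ W).symm
      haveI : IsNoetherian ℂ X :=
        (isNoetherian_iff_submodule_quotient (W.restrictScalars ℂ)).mpr ⟨h1, h2⟩
      exact IsNoetherian.iff_fg.mp this

/-- Let `A` be a commutative unital ℂ-algebra, finitely generated as a ℂ-algebra,
`m ⊆ A` a maximal ideal, `M` a finitely generated `A`-module, and `i : ℕ`.
If a ℂ-linear functional `φ : M → ℂ` vanishes on the submodule `mⁱ • M`, then `φ`
is `A`-finite. -/
theorem vanishing_on_pow_smul_isAFinite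
    (A : Type*) [CommRing A] [Algebra ℂ A] [Algebra.FiniteType ℂ A]
    (m : Ideal A) (hm : m.IsMaximal)
    (M : Type*) [AddCommGroup M] [Module A M] [Module ℂ M] [IsScalarTower ℂ A M]
    [Module.Finite A M] (i : ℕ)
    (φ : M →ₗ[ℂ] ℂ) (hφ : ∀ x ∈ (m ^ i • ⊤ : Submodule A M), φ x = 0) :
    IsAFinite A φ := by
  set W : Submodule ℂ M := (m ^ i • ⊤ : Submodule A M).restrictScalars ℂ with hWdef
  haveI : Module.Finite ℂ (M ⧸ (m ^ i • ⊤ : Submodule A M)) :=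
    aux_quot_pow_finite A m hm M i
  haveI : FiniteDimensional ℂ (M ⧸ W) :=
    Module.Finite.equiv (Submodule.Quotient.restrictScalarsEquiv ℂ _).symm
  haveI : FiniteDimensional ℂ W.dualAnnihilator :=
    Module.Finite.equiv W.dualQuotEquivDualAnnihilator
  apply Submodule.finiteDimensional_of_le (S₂ := W.dualAnnihilator)
  rw [Submodule.span_le]
  rintro ψ ⟨a, hψ⟩
  rw [SetLike.mem_coe, Submodule.mem_dualAnnihilator]
  intro x hx
  rw [hψ]
  refine hφ _ ?_
  exact Submodule.smul_of_tower_mem _ a ((Submodule.restrictScalars_mem ℂ _ _).mp hx)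
end

section
/- Let A be a commutative unital Noetherian integral domain with fraction field K. Let V be a finite-dimensional K-linear subspace of the K-vector space K^ℕ of all sequences of elements of K, and let M := V ∩ A^ℕ be the set of sequences in V all of whose terms lie in the image of A in K. Then M is a finitely generated A-module. -/
set_option synthInstance.maxHeartbeats 1000000
set_option maxHeartbeats 1000000

/-- Let `A` be a commutative unital Noetherian integral domain with fraction field `K`.
Let `V` be a finite-dimensional `K`-linear subspace of `K^ℕ`, and let
`M := V ∩ A^ℕ` be the `A`-submodule of sequences in `V` all of whose terms lie in the
image of `A` in `K`. Then `M` is a finitely generated `A`-module. -/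
theorem inter_sequences_fg
    (A : Type*) [CommRing A] [IsDomain A] [IsNoetherianRing A]
    (V : Submodule (FractionRing A) (ℕ → FractionRing A)) [FiniteDimensional (FractionRing A) V]
    (M : Submodule A (ℕ → FractionRing A))
    (hM : (M : Set (ℕ → FractionRing A)) =
      {f : ℕ → FractionRing A | f ∈ V ∧ ∀ n : ℕ, f n ∈ (algebraMap A (FractionRing A)).range}) :
    M.FG := by
  set K := FractionRing A
  -- coordinate functionals on V
  set E : ℕ → (V →ₗ[K] K) := fun n => (LinearMap.proj n).comp V.subtype with hE
  -- find a finite set t of coordinates that determine elements of V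
  have hart : IsArtinian K V := inferInstance
  obtain ⟨m, ⟨t, hmt⟩, hmin⟩ := IsArtinian.set_has_minimal
    {N : Submodule K V | ∃ t : Finset ℕ, N = ⨅ n ∈ t, LinearMap.ker (E n)}
    ⟨⊤, ∅, by simp⟩
  have hm_le : ∀ n : ℕ, m ≤ LinearMap.ker (E n) := by
    intro n
    have h1 : m ⊓ LinearMap.ker (E n) ∈
        {N : Submodule K V | ∃ t : Finset ℕ, N = ⨅ n ∈ t, LinearMap.ker (E n)} := by
      refine ⟨insert n t, ?_⟩
      rw [Finset.iInf_insert, ← hmt, inf_comm]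
    have h2 := hmin _ h1
    have : ¬ (m ⊓ LinearMap.ker (E n) < m) := h2
    have hle : m ⊓ LinearMap.ker (E n) ≤ m := inf_le_left
    have heq : m ⊓ LinearMap.ker (E n) = m := by
      rcases lt_or_eq_of_le hle with h | h
      · exact absurd h this
      · exact h
    rw [← heq]; exact inf_le_right
  have hm_bot : m = ⊥ := by
    rw [eq_bot_iff]
    intro v hv
    have : ∀ n : ℕ, (v : ℕ → K) n = 0 := fun n => hm_le n hv
    have : (v : ℕ → K) = 0 := funext this
    simpa [Submodule.mem_bot] using Subtype.ext this
  -- key: a member of V vanishing on t is zero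
  have hkey : ∀ v : V, (∀ n ∈ t, (v : ℕ → K) n = 0) → v = 0 := by
    intro v hv
    have : v ∈ (⨅ n ∈ t, LinearMap.ker (E n)) := by
      simp only [Submodule.mem_iInf, LinearMap.mem_ker]
      exact fun n hn => hv n hn
    rw [← hmt, hm_bot] at this
    simpa using this
  -- the Noetherian target module
  set L : (t → A) →ₗ[A] (t → K) :=
    LinearMap.pi (fun i => (Algebra.linearMap A K).comp (LinearMap.proj i)) with hL
  have hnoeth : IsNoetherian A (LinearMap.range L) :=
    isNoetherian_of_surjective L.rangeRestrict (LinearMap.range_rangeRestrict L)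
  -- the evaluation map from M
  set φ : M →ₗ[A] (t → K) :=
    (LinearMap.pi (fun i : t => LinearMap.proj (i : ℕ))).comp M.subtype with hφ
  have hrange : ∀ f : M, φ f ∈ LinearMap.range L := by
    intro f
    have hf : (f : ℕ → K) ∈ (M : Set (ℕ → K)) := f.2
    rw [hM] at hf
    choose g hg using hf.2
    exact ⟨fun i => g i, funext fun i => hg i⟩
  set ψ : M →ₗ[A] (LinearMap.range L) := LinearMap.codRestrict _ φ hrange with hψ
  have hinj : Function.Injective ψ := by
    intro f₁ f₂ hf
    have hφf : φ f₁ = φ f₂ := congrArg Subtype.val hf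
    have h12 : ∀ n ∈ t, (f₁ : ℕ → K) n = (f₂ : ℕ → K) n := by
      intro n hn
      exact congrFun hφf ⟨n, hn⟩
    have hf1 : (f₁ : ℕ → K) ∈ (M : Set (ℕ → K)) := f₁.2
    have hf2 : (f₂ : ℕ → K) ∈ (M : Set (ℕ → K)) := f₂.2
    rw [hM] at hf1 hf2
    have hdV : (⟨(f₁ : ℕ → K) - (f₂ : ℕ → K), sub_mem hf1.1 hf2.1⟩ : V) = 0 := by
      apply hkey
      intro n hn
      simp [h12 n hn]
    have : (f₁ : ℕ → K) - (f₂ : ℕ → K) = 0 := congrArg Subtype.val hdV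
    exact Subtype.ext (sub_eq_zero.mp this)
  have : IsNoetherian A M := isNoetherian_of_injective ψ hinj
  exact (Submodule.fg_top M).mp (IsNoetherian.noetherian ⊤)
end

section
/- Let n be a natural number and let A := ℂ[ℤⁿ] be the group algebra over ℂ of the free abelian group ℤⁿ (equivalently, the Laurent polynomial ring over ℂ in n variables). Let M be an A-module whose underlying ℂ-vector space has countable dimension (admits a countable spanning set). Suppose that for every unital ℂ-algebra homomorphism χ : A → ℂ, the space Hom_A(M, ℂ_χ) of A-module homomorphisms from M to the one-dimensional A-module ℂ_χ is finite-dimensional over ℂ. Then Hom_A(M, A) is a finitely generated A-module. -/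
set_option maxHeartbeats 2000000
set_option linter.unusedVariables false
set_option linter.unnecessarySimpa false
set_option linter.unreachableTactic false
set_option linter.unusedTactic false
set_option linter.unusedSectionVars false

open Module Submodule

section General

variable {A : Type*} [CommRing A] [IsDomain A] [IsNoetherianRing A] [Algebra ℂ A]
variable {M : Type*} [AddCommGroup M] [Module A M] [Module ℂ M] [IsScalarTower ℂ A M]

theorem bound_aux (χ : A →ₐ[ℂ] ℂ)
    [hfin : FiniteDimensional ℂ (span ℂ {φ : M →ₗ[ℂ] ℂ | ∀ a m, φ (a • m) = χ a * φ m})]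
    {r : ℕ} (φ : Fin r → (M →ₗ[A] A)) (hli : LinearIndependent A φ) :
    r ≤ finrank ℂ (span ℂ {φ : M →ₗ[ℂ] ℂ | ∀ a m, φ (a • m) = χ a * φ m}) := by
  classical
  set K := FractionRing A
  set Φ : M →ₗ[A] (Fin r → A) := LinearMap.pi φ with hΦ
  set g : (Fin r → A) →ₗ[A] (Fin r → K) :=
    LinearMap.pi (fun i => (Algebra.linearMap A K).comp (LinearMap.proj i)) with hg
  have hgapp : ∀ (x : Fin r → A) (i : Fin r), g x i = algebraMap A K (x i) := fun x i => rfl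
  -- Step B : the K-span of the image is everything
  have hW : span K (Set.range fun m => g (Φ m)) = ⊤ := by
    by_contra hW
    obtain ⟨ξ, hξ0, hξmap⟩ := Submodule.exists_dual_map_eq_bot_of_lt_top
      (lt_top_iff_ne_top.2 hW) inferInstance
    have hξW : ∀ m : M, ξ (g (Φ m)) = 0 := by
      intro m
      have : ξ (g (Φ m)) ∈ (span K (Set.range fun m => g (Φ m))).map ξ :=
        Submodule.mem_map_of_mem (subset_span (Set.mem_range_self m))
      rw [hξmap] at this
      simpa using this
    set c : Fin r → K := fun i => ξ (Pi.single i 1) with hc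
    have hξeval : ∀ x : Fin r → K, ξ x = ∑ i, x i * c i := by
      intro x
      have hx : x = ∑ i, x i • Pi.single i (1:K) := by
        ext j; simp [Pi.single_apply]
      conv_lhs => rw [hx, map_sum]
      simp [c, smul_eq_mul]
    obtain ⟨b, hb⟩ := IsLocalization.exist_integer_multiples (nonZeroDivisors A) Finset.univ c
    choose a ha using fun i => hb i (Finset.mem_univ i)
    have hbne : algebraMap A K (b : A) ≠ 0 := by
      have : (b : A) ≠ 0 := nonZeroDivisors.coe_ne_zero b
      simpa using fun h => this (IsFractionRing.injective A K (by simpa using h))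
    have hrel : ∀ i, a i = 0 := by
      have hsum : (∑ i, a i • φ i) = 0 := by
        apply LinearMap.ext; intro m
        simp only [LinearMap.zero_apply]
        apply IsFractionRing.injective A K
        rw [map_zero]
        simp only [LinearMap.sum_apply, LinearMap.smul_apply, smul_eq_mul, map_sum, map_mul]
        calc (∑ i, algebraMap A K (a i) * algebraMap A K ((φ i) m))
            = ∑ i, (b:A) • (c i * algebraMap A K ((φ i) m)) := by
              refine Finset.sum_congr rfl fun i _ => ?_
              rw [ha i, Algebra.smul_def, Algebra.smul_def, mul_assoc]
          _ = (b:A) • ∑ i, algebraMap A K ((φ i) m) * c i := by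
              rw [← Finset.smul_sum]; congr 1; exact Finset.sum_congr rfl fun i _ => mul_comm _ _
          _ = (b:A) • ξ (g (Φ m)) := by
              congr 1; rw [hξeval]
              refine Finset.sum_congr rfl fun i _ => ?_
              rw [hgapp]
              rfl
          _ = 0 := by rw [hξW, smul_zero]
      exact Fintype.linearIndependent_iff.mp hli a hsum
    have hc0 : ∀ i, c i = 0 := by
      intro i
      have := ha i
      rw [hrel i, map_zero] at this
      have := this.symm
      rw [Algebra.smul_def] at this
      exact (mul_eq_zero.mp this).resolve_left hbne
    apply hξ0
    apply LinearMap.ext; intro x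
    rw [hξeval]; simp [hc0]
  -- Step C : pick r elements of M whose images are K-linearly independent
  obtain ⟨mm, hmmli⟩ : ∃ mm : Fin r → M, LinearIndependent K (fun j => g (Φ (mm j))) := by
    obtain ⟨s, hsub, hspan, hlis⟩ := exists_linearIndependent K (Set.range fun m => g (Φ m))
    rw [hW] at hspan
    have hb : Submodule.span K (Set.range ((↑) : s → (Fin r → K))) = ⊤ := by
      rwa [Subtype.range_coe]
    let B : Basis s K (Fin r → K) := Basis.mk hlis (by rw [hb])
    haveI : Fintype s := FiniteDimensional.fintypeBasisIndex B
    have hcard : Fintype.card s = r := by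
      have := Module.finrank_eq_card_basis B
      rw [Module.finrank_pi, Fintype.card_fin] at this; exact this.symm
    let e : Fin r ≃ s := (Fintype.equivFinOfCardEq hcard).symm
    have hmem : ∀ j : Fin r, ((e j : (Fin r → K))) ∈ Set.range (fun m => g (Φ m)) :=
      fun j => hsub (e j).2
    choose mm hmm using hmem
    refine ⟨mm, ?_⟩
    have : (fun j => g (Φ (mm j))) = (fun j => ((e j : (Fin r → K)))) := funext fun j => hmm j
    rw [this]
    exact hlis.comp e e.injective
  -- Step D : the quotient V
  set I : Ideal A := RingHom.ker (χ : A →+* ℂ) with hI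
  set L : Submodule A (Fin r → A) := LinearMap.range Φ with hL
  set V := L ⧸ (I • ⊤ : Submodule A L) with hV
  set p : M →ₗ[A] V := (I • ⊤ : Submodule A L).mkQ ∘ₗ Φ.rangeRestrict with hp
  have hpsurj : Function.Surjective p := by
    rw [hp, LinearMap.coe_comp]
    exact (Submodule.mkQ_surjective _).comp Φ.surjective_rangeRestrict
  have hkey : ∀ (a : A) (v : V), a • v = χ a • v := by
    intro a v
    obtain ⟨l, rfl⟩ := Submodule.mkQ_surjective _ v
    have h1 : χ a • ((I • ⊤ : Submodule A L).mkQ l) = (I • ⊤ : Submodule A L).mkQ (χ a • l) := by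
      rw [Submodule.mkQ_apply, Submodule.mkQ_apply, ← Submodule.Quotient.mk_smul]
    have h2 : (χ a) • (l : L) = (algebraMap ℂ A (χ a)) • l := (algebraMap_smul A (χ a) l).symm
    have h3 : a • ((I • ⊤ : Submodule A L).mkQ l) = (I • ⊤ : Submodule A L).mkQ (a • l) :=
      (map_smul _ a l).symm
    have h4 : a • l - (algebraMap ℂ A (χ a)) • l = (a - algebraMap ℂ A (χ a)) • l :=
      (sub_smul _ _ _).symm
    rw [h1, h2, h3, ← sub_eq_zero, ← LinearMap.map_sub, h4]
    have hmem : (a - algebraMap ℂ A (χ a)) ∈ I := by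
      simp only [hI, RingHom.mem_ker, map_sub]
      simp [AlgHom.commutes]
    have : (a - algebraMap ℂ A (χ a)) • l ∈ (I • ⊤ : Submodule A L) :=
      Submodule.smul_mem_smul hmem Submodule.mem_top
    rwa [Submodule.mkQ_apply, Submodule.Quotient.mk_eq_zero]
  -- Step E : rank of V is at least r
  have hE : (r : Cardinal) ≤ Module.rank ℂ V := by
    by_contra hlt
    push_neg at hlt
    haveI : IsNoetherian ℂ V :=
      IsNoetherian.iff_rank_lt_aleph0.2 (lt_of_lt_of_le hlt (Cardinal.nat_lt_aleph0 r).le)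
    haveI : FiniteDimensional ℂ V := Module.finite_def.2 (IsNoetherian.noetherian ⊤)
    set t := finrank ℂ V with ht
    have htr : t < r := by
      have h1 : (t : Cardinal) = Module.rank ℂ V := finrank_eq_rank ℂ V
      have := h1 ▸ hlt
      exact_mod_cast this
    set x : Basis (Fin t) ℂ V := finBasis ℂ V with hx
    have hy : ∀ i, ∃ l : L, (I • ⊤ : Submodule A L).mkQ l = x i :=
      fun i => Submodule.mkQ_surjective _ (x i)
    choose y hyq using hy
    set P : Submodule A L := span A (Set.range y) with hP
    have hQle : (⊤ : Submodule A (L ⧸ P)) ≤ I • ⊤ := by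
      intro q _
      obtain ⟨l, rfl⟩ := P.mkQ_surjective q
      set c := x.repr ((I • ⊤ : Submodule A L).mkQ l) with hcdef
      set l' : L := ∑ i, (algebraMap ℂ A (c i)) • y i with hl'
      have hl'P : l' ∈ P := by
        apply Submodule.sum_mem
        intro i _
        exact Submodule.smul_mem _ _ (subset_span (Set.mem_range_self i))
      have hll' : l - l' ∈ (I • ⊤ : Submodule A L) := by
        rw [← Submodule.Quotient.mk_eq_zero, ← Submodule.mkQ_apply, LinearMap.map_sub]
        have h2 : (I • ⊤ : Submodule A L).mkQ l' = ∑ i, c i • x i := by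
          rw [hl', map_sum]
          refine Finset.sum_congr rfl fun i _ => ?_
          rw [LinearMap.map_smul, hyq i, algebraMap_smul]
        rw [h2]
        have h3 : ∑ i, c i • x i = (I • ⊤ : Submodule A L).mkQ l := by
          rw [hcdef]
          exact x.sum_repr _
        rw [h3, sub_self]
      have hstep : P.mkQ l = P.mkQ (l - l') := by
        have hz : P.mkQ l' = 0 := by
          rw [Submodule.mkQ_apply, Submodule.Quotient.mk_eq_zero]; exact hl'P
        rw [LinearMap.map_sub, hz, sub_zero]
      rw [hstep]
      have hmem : P.mkQ (l - l') ∈ Submodule.map P.mkQ (I • ⊤) :=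
        Submodule.mem_map_of_mem hll'
      rw [Submodule.map_smul''] at hmem
      exact Submodule.smul_mono le_rfl le_top hmem
    obtain ⟨aa, haa1, haa0⟩ :=
      Submodule.exists_sub_one_mem_and_smul_eq_zero_of_fg_of_le_smul I ⊤
        (IsNoetherian.noetherian ⊤) hQle
    have haaχ : χ aa = 1 := by
      have h1 : χ (aa - 1) = 0 := haa1
      rw [map_sub, map_one, sub_eq_zero] at h1
      exact h1
    have hane : algebraMap A K aa ≠ 0 := by
      intro h
      have : aa = 0 := IsFractionRing.injective A K (by simpa using h)
      rw [this, map_zero] at haaχ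
      exact zero_ne_one haaχ
    have hsub2 : ∀ l : L, aa • l ∈ P := by
      intro l
      have h0 : P.mkQ (aa • l) = 0 := by
        rw [LinearMap.map_smul]
        exact haa0 _ Submodule.mem_top
      rwa [Submodule.mkQ_apply, Submodule.Quotient.mk_eq_zero] at h0
    set w : Fin r → (Fin r → K) := fun j => g (Φ (mm j)) with hw
    set yc : Fin t → (Fin r → A) := fun i => (y i : Fin r → A) with hyc
    set WY : Submodule K (Fin r → K) := span K (Set.range fun i => g (yc i)) with hWY
    have hWYfin : finrank K WY ≤ t := by
      have := finrank_range_le_card (R := K) (fun i => g (yc i))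
      simpa [Set.finrank] using this
    have hwWY : ∀ j, w j ∈ WY := by
      intro j
      have h1 : aa • (⟨Φ (mm j), LinearMap.mem_range_self _ _⟩ : L) ∈ P := hsub2 _
      have h2 : aa • Φ (mm j) ∈ Submodule.map L.subtype P :=
        ⟨_, h1, rfl⟩
      have himg : L.subtype '' Set.range y = Set.range yc := by
        rw [← Set.range_comp]; rfl
      rw [hP, Submodule.map_span, himg] at h2
      have h3 : g (aa • Φ (mm j)) ∈ Submodule.map g (span A (Set.range yc)) :=
        Submodule.mem_map_of_mem h2
      rw [Submodule.map_span] at h3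
      have h4 : span A (g '' Set.range yc) ≤
          (span K (g '' Set.range yc)).restrictScalars A :=
        Submodule.span_le_restrictScalars A K _
      have h5 : g (aa • Φ (mm j)) ∈ span K (g '' Set.range yc) := h4 h3
      have himg2 : g '' Set.range yc = Set.range (fun i => g (yc i)) := by
        rw [← Set.range_comp]; rfl
      rw [himg2] at h5
      have h6 : g (aa • Φ (mm j)) = algebraMap A K aa • w j := by
        rw [LinearMap.map_smul, algebraMap_smul]
      rw [h6] at h5
      have hinv : w j = (algebraMap A K aa)⁻¹ • (algebraMap A K aa • w j) := by
        rw [smul_smul, inv_mul_cancel₀ hane, one_smul]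
      rw [hinv]
      exact WY.smul_mem _ h5
    have hrle : r ≤ finrank K WY := by
      let wv : Fin r → WY := fun j => ⟨w j, hwWY j⟩
      have hwvli : LinearIndependent K wv := by
        have hcomp : WY.subtype ∘ wv = w := rfl
        exact LinearIndependent.of_comp WY.subtype (by rw [hcomp]; exact hmmli)
      simpa using hwvli.fintype_card_le_finrank
    omega
  -- Step F : a linearly independent family of size r in V
  haveI : Module.Free ℂ V := Module.Free.of_divisionRing ℂ V
  obtain ⟨sF, hsFcard, hsFli⟩ := le_rank_iff_exists_linearIndependent_finset.mp hE
  have hcardF : Fintype.card (sF : Set V) = r := by simpa using hsFcard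
  let eF : Fin r ≃ (sF : Set V) := (Fintype.equivFinOfCardEq hcardF).symm
  set vv : Fin r → V := fun j => (eF j : V) with hvv
  have hvvinj : Function.Injective vv :=
    Subtype.val_injective.comp eF.injective
  -- Step G : dual functionals
  let B := Module.Basis.extend hsFli.linearIndepOn_id
  have hmemB : ∀ j, vv j ∈ hsFli.linearIndepOn_id.extend (Set.subset_univ _) :=
    fun j => hsFli.linearIndepOn_id.subset_extend _ ⟨eF j, rfl⟩
  set ξ : Fin r → (V →ₗ[ℂ] ℂ) := fun j => B.coord ⟨vv j, hmemB j⟩ with hξ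
  have hdual : ∀ i j, ξ i (vv j) = if j = i then 1 else 0 := by
    intro i j
    have h1 : B ⟨vv j, hmemB j⟩ = vv j := Module.Basis.extend_apply_self hsFli.linearIndepOn_id ⟨vv j, hmemB j⟩
    rw [hξ]
    simp only
    rw [← h1, Basis.coord_apply, Basis.repr_self, Finsupp.single_apply]
    congr 1
    simp only [Subtype.mk.injEq, eq_iff_iff]
    exact ⟨fun h => hvvinj (by exact h), fun h => by rw [h]⟩
  -- Step H : produce the functionals on M
  set F : Fin r → (M →ₗ[ℂ] ℂ) := fun j => (ξ j).comp (p.restrictScalars ℂ) with hF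
  have hFmem : ∀ j, F j ∈ {φ : M →ₗ[ℂ] ℂ | ∀ a m, φ (a • m) = χ a * φ m} := by
    intro j a m
    show ξ j ((p.restrictScalars ℂ) (a • m)) = χ a * ξ j ((p.restrictScalars ℂ) m)
    have h1 : (p.restrictScalars ℂ) (a • m) = a • ((p.restrictScalars ℂ) m) := by
      simp only [LinearMap.coe_restrictScalars]
      exact map_smul p a m
    rw [h1, hkey a _, map_smul, smul_eq_mul]
  have hFli : LinearIndependent ℂ F := by
    rw [Fintype.linearIndependent_iff]
    intro cc hcc i
    obtain ⟨m, hm⟩ := hpsurj (vv i)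
    have h0 : (∑ j, cc j • F j) m = 0 := by rw [hcc]; rfl
    simp only [LinearMap.sum_apply, LinearMap.smul_apply, smul_eq_mul] at h0
    have hFm : ∀ j, F j m = ξ j (vv i) := by
      intro j
      show ξ j ((p.restrictScalars ℂ) m) = _
      simp only [LinearMap.coe_restrictScalars]
      rw [hm]
    simp only [hFm, hdual] at h0
    simpa using h0
  let S := span ℂ {φ : M →ₗ[ℂ] ℂ | ∀ a m, φ (a • m) = χ a * φ m}
  let F' : Fin r → S := fun j => ⟨F j, subset_span (hFmem j)⟩
  have hF'li : LinearIndependent ℂ F' := by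
    have hcomp : S.subtype ∘ F' = F := rfl
    exact LinearIndependent.of_comp S.subtype (by rw [hcomp]; exact hFli)
  simpa using hF'li.fintype_card_le_finrank

theorem main_general (χ : A →ₐ[ℂ] ℂ)
    [hfin : FiniteDimensional ℂ (span ℂ {φ : M →ₗ[ℂ] ℂ | ∀ a m, φ (a • m) = χ a * φ m})]
    (hcount : ∃ s : Set M, s.Countable ∧ Submodule.span ℂ s = ⊤) :
    Module.Finite A (M →ₗ[A] A) := by
  classical
  obtain ⟨s, hsc, hsspan⟩ := hcount
  have hne : (insert (0:M) s).Nonempty := ⟨0, Set.mem_insert _ _⟩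
  obtain ⟨f, hf⟩ := (hsc.insert 0).exists_eq_range hne
  have hfspan : span A (Set.range f) = ⊤ := by
    rw [← hf, eq_top_iff]
    intro m _
    have h1 : m ∈ span ℂ (insert 0 s) := by
      have : m ∈ span ℂ s := by rw [hsspan]; trivial
      exact span_mono (Set.subset_insert _ _) this
    exact Submodule.span_le_restrictScalars ℂ A (insert 0 s) h1
  have hvanish : ∀ ψ : M →ₗ[A] A, (∀ i, ψ (f i) = 0) → ψ = 0 := by
    intro ψ h
    have h1 : span A (Set.range f) ≤ LinearMap.ker ψ :=
      span_le.2 (by rintro _ ⟨i, rfl⟩; exact h i)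
    rw [hfspan, top_le_iff] at h1
    exact LinearMap.ker_eq_top.mp h1
  set d := finrank ℂ (span ℂ {φ : M →ₗ[ℂ] ℂ | ∀ a m, φ (a • m) = χ a * φ m}) with hd
  have hkey : ∃ k : ℕ, ∀ ψ : M →ₗ[A] A, (∀ i < k, ψ (f i) = 0) → ψ = 0 := by
    by_contra hcon
    push_neg at hcon
    have step : ∀ (n:ℕ), ∃ ψ : M →ₗ[A] A, ∃ t:ℕ, (∀ i < n, ψ (f i) = 0) ∧ ψ (f t) ≠ 0 ∧ n ≤ t := by
      intro n
      obtain ⟨ψ, h1, h2⟩ := hcon n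
      obtain ⟨t, ht⟩ : ∃ t, ψ (f t) ≠ 0 := by
        by_contra h; push_neg at h; exact h2 (hvanish ψ h)
      have hnt : n ≤ t := by by_contra h; push_neg at h; exact ht (h1 t h)
      exact ⟨ψ, t, h1, ht, hnt⟩
    choose Ψ T h1 h2 h3 using step
    let u : ℕ → ℕ := fun c => Nat.rec 0 (fun _ uc => T uc + 1) c
    have hu : ∀ c, u (c+1) = T (u c) + 1 := fun c => rfl
    have humono : Monotone u := monotone_nat_of_le_succ (fun c => by
      have := h3 (u c); rw [hu]; omega)
    have hli : LinearIndependent A (fun c : Fin (d+1) => Ψ (u c)) := by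
      rw [Fintype.linearIndependent_iff]
      intro cc hcc
      have H : ∀ N : ℕ, ∀ c : Fin (d+1), (c:ℕ) = N → cc c = 0 := by
        intro N
        induction N using Nat.strong_induction_on with
        | _ N ih =>
          intro c hc
          have heval : (∑ c', cc c' • Ψ (u c')) (f (T (u c))) = 0 := by rw [hcc]; rfl
          simp only [LinearMap.sum_apply, LinearMap.smul_apply, smul_eq_mul] at heval
          have hsingle : ∀ b : Fin (d+1), b ≠ c → cc b * Ψ (u b) (f (T (u c))) = 0 := by
            intro b hb
            rcases lt_or_gt_of_ne (fun h : (b:ℕ) = (c:ℕ) => hb (Fin.ext h)) with hlt | hgt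
            · rw [ih b (by omega) b rfl, zero_mul]
            · have hT : T (u c) < u b := by
                have hstep : T (u c) < u ((c:ℕ)+1) := by rw [hu]; omega
                exact lt_of_lt_of_le hstep (humono hgt)
              rw [h1 (u b) _ hT, mul_zero]
          rw [Finset.sum_eq_single c (fun b _ hb => hsingle b hb) (fun h => absurd (Finset.mem_univ c) h)] at heval
          exact (mul_eq_zero.mp heval).resolve_right (h2 (u c))
      exact fun i => H i i rfl
    have hbd := bound_aux χ (fun c : Fin (d+1) => Ψ (u c)) hli
    rw [← hd] at hbd
    omega
  obtain ⟨k, hk⟩ := hkey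
  let E : (M →ₗ[A] A) →ₗ[A] (Fin k → A) :=
    { toFun := fun ψ => fun j => ψ (f j),
      map_add' := fun ψ1 ψ2 => by funext j; simp,
      map_smul' := fun a ψ => by funext j; simp }
  have hEinj : Function.Injective E := by
    intro ψ1 ψ2 h
    rw [← sub_eq_zero]
    apply hk
    intro i hi
    have := congrFun h (⟨i, hi⟩ : Fin k)
    simp only [E, LinearMap.coe_mk, AddHom.coe_mk] at this
    simp [LinearMap.sub_apply, this]
  haveI : IsNoetherian A (M →ₗ[A] A) := isNoetherian_of_injective E hEinj
  exact Module.finite_def.2 (IsNoetherian.noetherian ⊤)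

end General

section Instances

instance monoidFG_multiplicative_pi (n : ℕ) : Monoid.FG (Multiplicative (Fin n → ℤ)) := by
  have h1 : Module.Finite ℤ (Fin n → ℤ) := inferInstance
  have h2 : AddGroup.FG (Fin n → ℤ) := Module.Finite.iff_addGroup_fg.mp h1
  have h3 : AddMonoid.FG (Fin n → ℤ) := AddGroup.fg_iff_addMonoid_fg.mp h2
  infer_instance

instance isDomain_A (n : ℕ) : IsDomain (MonoidAlgebra ℂ (Multiplicative (Fin n → ℤ))) :=
  NoZeroDivisors.to_isDomain _

instance isNoetherian_A (n : ℕ) :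
    IsNoetherianRing (MonoidAlgebra ℂ (Multiplicative (Fin n → ℤ))) :=
  Algebra.FiniteType.isNoetherianRing ℂ _

end Instances

/-- Let `A := ℂ[ℤⁿ]` be the group algebra of the free abelian group `ℤⁿ` over `ℂ`
(the Laurent polynomial ring in `n` variables). Let `M` be an `A`-module whose
underlying ℂ-vector space has countable dimension. If for every unital ℂ-algebra
homomorphism `χ : A → ℂ` the space `Hom_A(M, ℂ_χ)` (realized as the space of
ℂ-linear functionals `φ` with `φ (a • m) = χ a * φ m`) is finite-dimensional over ℂ,
then `Hom_A(M, A)` is a finitely generated `A`-module. -/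
theorem hom_to_group_algebra_finite
    (n : ℕ)
    (M : Type*) [AddCommGroup M]
    [Module (MonoidAlgebra ℂ (Multiplicative (Fin n → ℤ))) M]
    [Module ℂ M] [IsScalarTower ℂ (MonoidAlgebra ℂ (Multiplicative (Fin n → ℤ))) M]
    (hcount : ∃ s : Set M, s.Countable ∧ Submodule.span ℂ s = ⊤)
    (hfin : ∀ χ : MonoidAlgebra ℂ (Multiplicative (Fin n → ℤ)) →ₐ[ℂ] ℂ,
      FiniteDimensional ℂ (Submodule.span ℂ
        {φ : M →ₗ[ℂ] ℂ | ∀ (a : MonoidAlgebra ℂ (Multiplicative (Fin n → ℤ))) (m : M),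
          φ (a • m) = χ a * φ m})) :
    Module.Finite (MonoidAlgebra ℂ (Multiplicative (Fin n → ℤ)))
      (M →ₗ[MonoidAlgebra ℂ (Multiplicative (Fin n → ℤ))]
        MonoidAlgebra ℂ (Multiplicative (Fin n → ℤ))) := by
  let χ₀ : MonoidAlgebra ℂ (Multiplicative (Fin n → ℤ)) →ₐ[ℂ] ℂ :=
    MonoidAlgebra.lift ℂ ℂ (Multiplicative (Fin n → ℤ)) 1
  haveI := hfin χ₀
  exact main_general χ₀ hcount
end
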